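/- Let T be an injective multidimensional array on [M_1] × ... × [M_O] with O ≥ 2, represented as a weakly ordered hypergraph H whose vertices are values of T, whose edges are the 1-slices (ordered by the free index), partitioned by mode. Then two values T(a) and T(b) lie in the same 1-slice of mode i if and only if the mode-j signed distance d_{p_j}(T(a), T(b)) is 0 for every j ≠ i; i.e., d_{p_j}(T(a), T(b)) = b_j − a_j for all j. -/
import Mathlib


/-- Multi-index set of a multidimensional array of order `O` with mode sizes `M`. -/
abbrev Idx (O : ℕ) (M : Fin O → ℕ) := ∀ i, Fin (M i)

/-- The mode-`i` 1-slice of the array `T` through the multi-index `c`: the set of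
values obtained by letting the `i`-th index run freely, linearly ordered by that
free index. -/
def slice1 {O : ℕ} {M : Fin O → ℕ} {V : Type} (T : Idx O M → V) (i : Fin O)
    (c : Idx O M) : Set V :=
  {v | ∃ t : Fin (M i), v = T (Function.update c i t)}

/-- A step of a path in the hypergraph whose vertices are values of the array and
whose edges are the 1-slices: a mode `i`, a base multi-index `c`, and the two
positions `s, t` of the free index within the mode-`i` slice through `c`. -/
def ArrStep (O : ℕ) (M : Fin O → ℕ) := Σ i : Fin O, (Idx O M) × Fin (M i) × Fin (M i)

/-- Validity of a path: it starts at the given vertex and chains correctly. -/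
def chainOk {O : ℕ} {M : Fin O → ℕ} {V : Type} (T : Idx O M → V) :
    V → List (ArrStep O M) → Prop
  | _, [] => True
  | v, ⟨i, c, s, t⟩ :: rest =>
      v = T (Function.update c i s) ∧ chainOk T (T (Function.update c i t)) rest

/-- The final vertex of a path. -/
def endA {O : ℕ} {M : Fin O → ℕ} {V : Type} (T : Idx O M → V) :
    V → List (ArrStep O M) → V
  | v, [] => v
  | _, ⟨i, c, _, t⟩ :: rest => endA T (T (Function.update c i t)) rest

/-- The mode-`j` signed distance of a path: the sum of the signed index differences
over the steps taken within mode-`j` slices. -/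
def distA {O : ℕ} {M : Fin O → ℕ} (j : Fin O) : List (ArrStep O M) → ℤ
  | [] => 0
  | ⟨i, _, s, t⟩ :: rest => (if i = j then (t : ℤ) - (s : ℤ) else 0) + distA j rest

/-- for an injective array of order `O ≥ 2` encoded as a weakly ordered
hypergraph (vertices the values, edges the 1-slices partitioned by mode): the mode-`j`
signed distance between `T a` and `T b` is path-independent and equals `b_j − a_j`,
and two values lie in the same mode-`i` 1-slice if and only if their multi-indices
agree in every coordinate `j ≠ i` (i.e. the mode-`j` distance is `0` for all `j ≠ i`). -/
theorem same_slice_iff_zero_distance {O : ℕ} {M : Fin O → ℕ} {V : Type}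
    (hO : 2 ≤ O) (T : Idx O M → V) (hinj : Function.Injective T) (i : Fin O) :
    (∀ (a b : Idx O M) (steps : List (ArrStep O M)),
      chainOk T (T a) steps → endA T (T a) steps = T b →
      ∀ j : Fin O, distA j steps = (b j : ℤ) - (a j : ℤ)) ∧
    (∀ a b : Idx O M,
      (∃ c : Idx O M, T a ∈ slice1 T i c ∧ T b ∈ slice1 T i c) ↔
      ∀ j : Fin O, j ≠ i → a j = b j) := by
  have key : ∀ (steps : List (ArrStep O M)) (a b : Idx O M),
      chainOk T (T a) steps → endA T (T a) steps = T b →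
      ∀ j : Fin O, distA j steps = (b j : ℤ) - (a j : ℤ) := by
    intro steps
    induction steps with
    | nil =>
      intro a b _ hend j
      have : a = b := hinj hend
      simp [distA, this]
    | cons step rest ih =>
      rcases step with ⟨i', c, s, t⟩
      intro a b hchain hend j
      obtain ⟨h1, h2⟩ := hchain
      have ha : a = Function.update c i' s := hinj h1
      have hend' : endA T (T (Function.update c i' t)) rest = T b := hend
      have := ih (Function.update c i' t) b h2 hend' j
      simp only [distA, this]
      by_cases hji : i' = j
      · subst hji
        simp [ha]
      · have hji' : j ≠ i' := fun h => hji h.symm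
        simp [ha, Function.update_of_ne hji', hji]
  refine ⟨fun a b steps => key steps a b, fun a b => ?_⟩
  constructor
  · rintro ⟨c, ⟨s, hs⟩, ⟨t, ht⟩⟩ j hj
    have ha : a = Function.update c i s := hinj hs
    have hb : b = Function.update c i t := hinj ht
    rw [ha, hb, Function.update_of_ne hj, Function.update_of_ne hj]
  · intro h
    refine ⟨a, ⟨a i, ?_⟩, ⟨b i, ?_⟩⟩
    · rw [Function.update_eq_self]
    · congr 1
      funext j
      by_cases hj : j = i
      · subst hj; simp
      · rw [Function.update_of_ne hj]; exact (h j hj).symm
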